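/- In the Nisan game with Nisan parameter k equal to the clique number ω(G), if X* is a maximum-clique equilibrium (the uniform strategy over a maximum clique, padded with 0 at index 0), then max_{0 ≤ i ≤ n} (C⁺X*)ᵢ = X*·C⁺X* = 1 - 1/(2k); in particular X* is a symmetric Nash equilibrium strategy of (C⁺, (C⁺)ᵀ). -/

import Mathlib

open Matrix Finset

/-- The Nisan–Bomze payoff matrix of a graph `G` with Nisan parameter `k`.
Index `none` is Nisan's strategy 0; index `some a` is vertex `a`. -/
noncomputable def nisanMatrix {n : ℕ} (G : SimpleGraph (Fin n)) [DecidableRel G.Adj] (k : ℕ) :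
    Matrix (Option (Fin n)) (Option (Fin n)) ℝ :=
  fun i j =>
    match i, j with
    | none, _ => 1 - 1 / (2 * k)
    | _, none => 1 - 1 / (2 * k)
    | some a, some b => if a = b then 1 / 2 else if G.Adj a b then 1 else 0

/-- When the Nisan parameter equals the clique number, a maximum-clique equilibrium
achieves maximum payoff equal to its potential 1 - 1/(2k), and is a symmetric Nash
equilibrium strategy. -/
theorem nisan_max_clique_equilibrium {n : ℕ} (G : SimpleGraph (Fin n)) [DecidableRel G.Adj]
    (k : ℕ) (hk : 1 < k)
    (S : Finset (Fin n)) (hS : G.IsNClique k S)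
    (hmax : ∀ (m : ℕ) (S' : Finset (Fin n)), G.IsNClique m S' → m ≤ k)
    (Xs : Option (Fin n) → ℝ)
    (hXs : Xs = fun i => match i with
      | none => 0
      | some a => if a ∈ S then (1 : ℝ) / k else 0) :
    (∀ i, (nisanMatrix G k).mulVec Xs i ≤ Xs ⬝ᵥ (nisanMatrix G k).mulVec Xs) ∧
    Xs ⬝ᵥ (nisanMatrix G k).mulVec Xs = 1 - 1 / (2 * k) ∧
    ∀ X ∈ stdSimplex ℝ (Option (Fin n)),
      (Xs - X) ⬝ᵥ (nisanMatrix G k).mulVec Xs ≥ 0 := by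
  have hk0 : (0:ℝ) < (k:ℝ) := by exact_mod_cast Nat.zero_lt_of_lt hk
  have hkne : (k:ℝ) ≠ 0 := ne_of_gt hk0
  set c : ℝ := 1 - 1/(2*k) with hc
  have hXnone : Xs none = 0 := by rw [hXs]
  have hXsome : ∀ a, Xs (some a) = if a ∈ S then (1:ℝ)/k else 0 := by
    intro a; rw [hXs]
  have hXsum : ∑ i, Xs i = 1 := by
    rw [Fintype.sum_option, hXnone, zero_add]
    simp only [hXsome]
    rw [Finset.sum_ite_mem, Finset.univ_inter, Finset.sum_const, hS.card_eq]
    rw [nsmul_eq_mul]; field_simp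
  set M := nisanMatrix G k with hM
  have hMnone : ∀ j, M none j = c := by intro j; cases j <;> rfl
  have hvnone : M.mulVec Xs none = c := by
    simp only [Matrix.mulVec, dotProduct, hMnone]
    rw [← Finset.mul_sum, hXsum, mul_one]
  have key : ∀ a, M.mulVec Xs (some a)
      = (1/k) * ∑ b ∈ S, (if a = b then (1:ℝ)/2 else if G.Adj a b then 1 else 0) := by
    intro a
    simp only [Matrix.mulVec, dotProduct]
    rw [Fintype.sum_option, hXnone, mul_zero, zero_add]
    simp only [hXsome, mul_ite, mul_zero]
    rw [Finset.sum_ite_mem, Finset.univ_inter, Finset.mul_sum]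
    exact Finset.sum_congr rfl fun b hb => mul_comm _ _
  have hcard_erase : ∀ a ∈ S, ((S.erase a).card : ℝ) = (k:ℝ) - 1 := by
    intro a ha
    rw [Finset.card_erase_of_mem ha, hS.card_eq, Nat.cast_sub (le_of_lt hk), Nat.cast_one]
  have hvS : ∀ a ∈ S, M.mulVec Xs (some a) = c := by
    intro a ha
    rw [key a, ← Finset.add_sum_erase _ _ ha, if_pos rfl]
    have h1 : ∑ b ∈ S.erase a, (if a = b then (1:ℝ)/2 else if G.Adj a b then 1 else 0)
        = ((S.erase a).card : ℝ) := by
      rw [Finset.cast_card]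
      refine Finset.sum_congr rfl fun b hb => ?_
      have hne : a ≠ b := fun h => (Finset.ne_of_mem_erase hb) h.symm
      rw [if_neg hne, if_pos (hS.isClique ha (Finset.mem_of_mem_erase hb) hne)]
    rw [h1, hcard_erase a ha, hc]
    field_simp
    ring
  have hvle : ∀ i, M.mulVec Xs i ≤ c := by
    intro i
    match i with
    | none => rw [hvnone]
    | some a =>
      by_cases ha : a ∈ S
      · rw [hvS a ha]
      · -- a not in S : some vertex of S is not adjacent to a
        have hex : ∃ b₀ ∈ S, ¬ G.Adj a b₀ := by
          by_contra hcon
          push_neg at hcon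
          have hclique : G.IsNClique (k+1) (insert a S) := by
            constructor
            · rw [Finset.coe_insert]
              exact hS.isClique.insert fun b hb _ => hcon b hb
            · rw [Finset.card_insert_of_notMem ha, hS.card_eq]
          exact absurd (hmax (k+1) _ hclique) (by omega)
        obtain ⟨b₀, hb₀S, hb₀⟩ := hex
        have hne : a ≠ b₀ := fun h => ha (h ▸ hb₀S)
        rw [key a, ← Finset.add_sum_erase _ _ hb₀S, if_neg hne, if_neg hb₀, zero_add]
        have hle : ∑ b ∈ S.erase b₀, (if a = b then (1:ℝ)/2 else if G.Adj a b then 1 else 0)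
            ≤ ((S.erase b₀).card : ℝ) := by
          rw [Finset.cast_card]
          refine Finset.sum_le_sum fun b hb => ?_
          split_ifs <;> norm_num
        calc (1/(k:ℝ)) * ∑ b ∈ S.erase b₀, (if a = b then (1:ℝ)/2 else if G.Adj a b then 1 else 0)
            ≤ (1/(k:ℝ)) * ((S.erase b₀).card : ℝ) := by
              exact mul_le_mul_of_nonneg_left hle (by positivity)
          _ = 1 - 1/(k:ℝ) := by rw [hcard_erase b₀ hb₀S]; field_simp
          _ ≤ c := by
              rw [hc]
              have : 1/(2*(k:ℝ)) ≤ 1/(k:ℝ) :=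
                one_div_le_one_div_of_le hk0 (by linarith)
              linarith
  have hdot : Xs ⬝ᵥ M.mulVec Xs = c := by
    rw [dotProduct, Fintype.sum_option, hXnone, zero_mul, zero_add]
    simp only [hXsome, ite_mul, zero_mul]
    rw [Finset.sum_ite_mem, Finset.univ_inter]
    have : ∑ a ∈ S, (1:ℝ)/k * M.mulVec Xs (some a) = ∑ a ∈ S, (1:ℝ)/k * c :=
      Finset.sum_congr rfl fun a ha => by rw [hvS a ha]
    rw [this, Finset.sum_const, hS.card_eq, nsmul_eq_mul]
    field_simp
  refine ⟨fun i => by rw [hdot]; exact hvle i, hdot, ?_⟩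
  intro X hX
  obtain ⟨hX0, hXsum1⟩ := hX
  have hXdot : X ⬝ᵥ M.mulVec Xs ≤ c := by
    rw [dotProduct]
    calc ∑ i, X i * M.mulVec Xs i ≤ ∑ i, X i * c :=
          Finset.sum_le_sum fun i _ => mul_le_mul_of_nonneg_left (hvle i) (hX0 i)
      _ = c := by rw [← Finset.sum_mul, hXsum1, one_mul]
  rw [sub_dotProduct, hdot]
  linarith
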